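/- Uniqueness of the rubber-band equilibrium: for a finite connected graph G = (V, E) with positive spring constants δ_e and a nonempty set Φ ⊆ V of vertices with fixed positions in ℝ³, the energy E(x) = Σ_{{v,w} ∈ E} δ_{vw} ‖x_v − x_w‖² over all placements x : V → ℝ³ extending the fixed positions has a unique minimizer, characterized by Σ_{w ∈ N(v)} δ_{vw}(x_v − x_w) = 0 for all v ∉ Φ. -/

import Mathlib

open Set Finset

/-- The rubber-band energy `E(x) = Σ_{{v,w} ∈ E} δ_{vw} ‖x_v - x_w‖²` of a
placement `x` of the vertices in `ℝ³` (each edge counted once, via halving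
the symmetric double sum). -/
noncomputable def rubberEnergy {V : Type*} [Fintype V] (G : SimpleGraph V)
    [DecidableRel G.Adj] (δ : V → V → ℝ)
    (x : V → EuclideanSpace ℝ (Fin 3)) : ℝ :=
  (1 / 2) * ∑ v, ∑ w, if G.Adj v w then δ v w * ‖x v - x w‖ ^ 2 else 0

set_option linter.unusedSectionVars false

section Aux

variable {V : Type*} [Fintype V] [DecidableEq V] (G : SimpleGraph V) [DecidableRel G.Adj]
  (δ : V → V → ℝ)

/-- net force at v -/
noncomputable def rbF (x : V → EuclideanSpace ℝ (Fin 3)) (v : V) : EuclideanSpace ℝ (Fin 3) :=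
  ∑ w ∈ G.neighborFinset v, δ v w • (x v - x w)

lemma rubberEnergy_nonneg (hδ : ∀ v w, G.Adj v w → 0 ≤ δ v w)
    (x : V → EuclideanSpace ℝ (Fin 3)) : 0 ≤ rubberEnergy G δ x := by
  unfold rubberEnergy
  have : 0 ≤ ∑ v, ∑ w, if G.Adj v w then δ v w * ‖x v - x w‖ ^ 2 else 0 := by
    refine Finset.sum_nonneg fun v _ => Finset.sum_nonneg fun w _ => ?_
    split_ifs with h
    · exact mul_nonneg (hδ v w h) (by positivity)
    · exact le_refl 0
  linarith

lemma cross_sum (hδsymm : ∀ v w, δ v w = δ w v) (x d : V → EuclideanSpace ℝ (Fin 3)) :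
    ∑ v, ∑ w, (if G.Adj v w then δ v w * (inner ℝ (x v - x w) (d v - d w) : ℝ) else 0)
      = 2 * ∑ v, (inner ℝ (rbF G δ x v) (d v) : ℝ) := by
  have key : ∀ v w, (if G.Adj v w then δ v w * (inner ℝ (x v - x w) (d v - d w) : ℝ) else 0)
      = (if G.Adj v w then δ v w * (inner ℝ (x v - x w) (d v) : ℝ) else 0)
        - (if G.Adj v w then δ v w * (inner ℝ (x v - x w) (d w) : ℝ) else 0) := by
    intro v w; split_ifs with h
    · rw [inner_sub_right]; ring
    · ring
  simp_rw [key, Finset.sum_sub_distrib]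
  have h2 : ∑ v, ∑ w, (if G.Adj v w then δ v w * (inner ℝ (x v - x w) (d w) : ℝ) else 0)
      = - ∑ v, ∑ w, (if G.Adj v w then δ v w * (inner ℝ (x v - x w) (d v) : ℝ) else 0) := by
    rw [Finset.sum_comm, ← Finset.sum_neg_distrib]
    refine Finset.sum_congr rfl fun v _ => ?_
    rw [← Finset.sum_neg_distrib]
    refine Finset.sum_congr rfl fun w _ => ?_
    rcases Classical.em (G.Adj v w) with h | h
    · simp only [h, h.symm, if_true]
      rw [hδsymm w v, show x w - x v = -(x v - x w) by abel, inner_neg_left]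
      ring
    · have h' : ¬ G.Adj w v := fun hh => h hh.symm
      simp [h, h']
  rw [h2]
  have h3 : ∀ v, ∑ w, (if G.Adj v w then δ v w * (inner ℝ (x v - x w) (d v) : ℝ) else 0)
      = (inner ℝ (rbF G δ x v) (d v) : ℝ) := by
    intro v
    rw [rbF, sum_inner]
    rw [← Finset.sum_filter]
    have : Finset.univ.filter (fun w => G.Adj v w) = G.neighborFinset v := by
      ext w; simp [SimpleGraph.mem_neighborFinset]
    rw [this]
    exact Finset.sum_congr rfl fun w _ => by rw [real_inner_smul_left]
  simp_rw [h3]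
  ring

lemma rubberEnergy_expand (hδsymm : ∀ v w, δ v w = δ w v)
    (x d : V → EuclideanSpace ℝ (Fin 3)) :
    rubberEnergy G δ (x + d)
      = rubberEnergy G δ x + 2 * ∑ v, (inner ℝ (rbF G δ x v) (d v) : ℝ)
        + rubberEnergy G δ d := by
  unfold rubberEnergy
  have hpt : ∀ v w : V, (x + d) v - (x + d) w = (x v - x w) + (d v - d w) := by
    intro v w; simp only [Pi.add_apply]; abel
  have expand : (∑ v, ∑ w, if G.Adj v w then δ v w * ‖(x+d) v - (x+d) w‖ ^ 2 else 0)
      = (∑ v, ∑ w, if G.Adj v w then δ v w * ‖x v - x w‖ ^ 2 else 0)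
      + 2 * (∑ v, ∑ w, if G.Adj v w then δ v w * (inner ℝ (x v - x w) (d v - d w) : ℝ) else 0)
      + (∑ v, ∑ w, if G.Adj v w then δ v w * ‖d v - d w‖ ^ 2 else 0) := by
    rw [Finset.mul_sum, ← Finset.sum_add_distrib, ← Finset.sum_add_distrib]
    refine Finset.sum_congr rfl fun v _ => ?_
    rw [Finset.mul_sum, ← Finset.sum_add_distrib, ← Finset.sum_add_distrib]
    refine Finset.sum_congr rfl fun w _ => ?_
    split_ifs with h
    · rw [hpt v w, norm_add_sq_real]; ring
    · ring
  rw [expand, ← cross_sum G δ hδsymm x d]; ring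


lemma edge_le (hδ : ∀ v w, G.Adj v w → 0 ≤ δ v w) (x : V → EuclideanSpace ℝ (Fin 3))
    {a b : V} (hab : G.Adj a b) :
    δ a b * ‖x a - x b‖ ^ 2 ≤ 2 * rubberEnergy G δ x := by
  have hterm : ∀ v w, 0 ≤ (if G.Adj v w then δ v w * ‖x v - x w‖ ^ 2 else 0) := by
    intro v w; split_ifs with h
    · exact mul_nonneg (hδ v w h) (by positivity)
    · exact le_refl 0
  have h1 : (if G.Adj a b then δ a b * ‖x a - x b‖ ^ 2 else 0)
      ≤ ∑ w, if G.Adj a w then δ a w * ‖x a - x w‖ ^ 2 else 0 :=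
    Finset.single_le_sum (fun w _ => hterm a w) (Finset.mem_univ b)
  have h2 : (∑ w, if G.Adj a w then δ a w * ‖x a - x w‖ ^ 2 else 0)
      ≤ ∑ v, ∑ w, if G.Adj v w then δ v w * ‖x v - x w‖ ^ 2 else 0 :=
    Finset.single_le_sum (fun v _ => Finset.sum_nonneg fun w _ => hterm v w) (Finset.mem_univ a)
  rw [if_pos hab] at h1
  unfold rubberEnergy
  linarith

lemma smul_energy (x : V → EuclideanSpace ℝ (Fin 3)) (t : ℝ) :
    rubberEnergy G δ (t • x) = t ^ 2 * rubberEnergy G δ x := by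
  unfold rubberEnergy
  have key : ∀ v w, (if G.Adj v w then δ v w * ‖(t • x) v - (t • x) w‖ ^ 2 else 0)
      = t ^ 2 * (if G.Adj v w then δ v w * ‖x v - x w‖ ^ 2 else 0) := by
    intro v w; split_ifs with h
    · have hs : (t • x) v - (t • x) w = t • (x v - x w) := by
        simp only [Pi.smul_apply]; rw [smul_sub]
      rw [hs, norm_smul]
      simp only [Real.norm_eq_abs, mul_pow, sq_abs]
      ring
    · ring
  simp_rw [key, ← Finset.mul_sum]
  ring

lemma walk_norm_le (x : V → EuclideanSpace ℝ (Fin 3)) (C : ℝ)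
    (hC : ∀ a b, G.Adj a b → ‖x a - x b‖ ≤ C) :
    ∀ {u v : V} (p : G.Walk u v), ‖x u - x v‖ ≤ p.length * C := by
  intro u v p
  induction p with
  | nil => simp
  | cons h q ih =>
    rename_i a b c
    have : ‖x a - x c‖ ≤ ‖x a - x b‖ + ‖x b - x c‖ := by
      have := norm_add_le (x a - x b) (x b - x c)
      simpa using this
    have h1 := hC a b h
    simp only [SimpleGraph.Walk.length_cons]
    push_cast
    linarith

lemma walk_eq (d : V → EuclideanSpace ℝ (Fin 3))
    (hadj : ∀ a b, G.Adj a b → d a = d b) :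
    ∀ {u v : V}, G.Walk u v → d u = d v := by
  intro u v p
  induction p with
  | nil => rfl
  | cons h q ih => exact (hadj _ _ h).trans ih

lemma energy_zero_adj_eq (hδpos : ∀ v w, G.Adj v w → 0 < δ v w)
    (d : V → EuclideanSpace ℝ (Fin 3)) (hE : rubberEnergy G δ d = 0)
    {a b : V} (hab : G.Adj a b) : d a = d b := by
  have := edge_le G δ (fun v w h => (hδpos v w h).le) d hab
  rw [hE] at this
  have hd : ‖d a - d b‖ ^ 2 ≤ 0 := by
    have hpos := hδpos a b hab
    nlinarith [sq_nonneg ‖d a - d b‖]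
  have : ‖d a - d b‖ = 0 := by nlinarith [norm_nonneg (d a - d b), sq_nonneg ‖d a - d b‖]
  have := norm_eq_zero.mp this
  exact sub_eq_zero.mp this


lemma rubberEnergy_continuous : Continuous (rubberEnergy G δ) := by
  unfold rubberEnergy
  refine continuous_const.mul ?_
  refine continuous_finset_sum _ fun v _ => continuous_finset_sum _ fun w _ => ?_
  by_cases h : G.Adj v w
  · simp only [if_pos h]
    exact continuous_const.mul (((continuous_apply v).sub (continuous_apply w)).norm.pow 2)
  · simp only [if_neg h]
    exact continuous_const

end Aux


/-- **Uniqueness of the rubber-band equilibrium.**  For a finite connected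
graph with positive spring constants and a nonempty set `Φ` of vertices with
prescribed positions in `ℝ³`, the energy has a unique minimizer among all
placements extending the prescribed positions, and a placement is the
minimizer iff it satisfies the equilibrium equations
`Σ_{w ∈ N(v)} δ_{vw}(x_v - x_w) = 0` at every free vertex `v ∉ Φ`. -/
theorem rubber_band_unique_minimizer {V : Type*} [Fintype V] [DecidableEq V]
    (G : SimpleGraph V) [DecidableRel G.Adj] (hGconn : G.Connected)
    (Φ : Set V) (hΦ : Φ.Nonempty)
    (x₀ : V → EuclideanSpace ℝ (Fin 3))
    (δ : V → V → ℝ) (hδsymm : ∀ v w, δ v w = δ w v)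
    (hδpos : ∀ v w, G.Adj v w → 0 < δ v w) :
    (∃! x : V → EuclideanSpace ℝ (Fin 3),
        (∀ v ∈ Φ, x v = x₀ v) ∧
        ∀ y : V → EuclideanSpace ℝ (Fin 3), (∀ v ∈ Φ, y v = x₀ v) →
          rubberEnergy G δ x ≤ rubberEnergy G δ y) ∧
    ∀ x : V → EuclideanSpace ℝ (Fin 3), (∀ v ∈ Φ, x v = x₀ v) →
      ((∀ y : V → EuclideanSpace ℝ (Fin 3), (∀ v ∈ Φ, y v = x₀ v) →
          rubberEnergy G δ x ≤ rubberEnergy G δ y) ↔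
        ∀ v ∉ Φ, ∑ w ∈ G.neighborFinset v, δ v w • (x v - x w) = 0) := by
  classical
  have hδnn : ∀ v w, G.Adj v w → 0 ≤ δ v w := fun v w h => (hδpos v w h).le
  -- cross term vanishes for an equilibrium x against d vanishing on Φ
  have cross_zero : ∀ (x d : V → EuclideanSpace ℝ (Fin 3)),
      (∀ v ∉ Φ, rbF G δ x v = 0) → (∀ v ∈ Φ, d v = 0) →
      ∑ v, (inner ℝ (rbF G δ x v) (d v) : ℝ) = 0 := by
    intro x d hx hd
    refine Finset.sum_eq_zero fun v _ => ?_
    by_cases hv : v ∈ Φ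
    · rw [hd v hv, inner_zero_right]
    · rw [hx v hv, inner_zero_left]
  -- characterization
  have char : ∀ x : V → EuclideanSpace ℝ (Fin 3), (∀ v ∈ Φ, x v = x₀ v) →
      ((∀ y : V → EuclideanSpace ℝ (Fin 3), (∀ v ∈ Φ, y v = x₀ v) →
          rubberEnergy G δ x ≤ rubberEnergy G δ y) ↔
        ∀ v ∉ Φ, rbF G δ x v = 0) := by
    intro x hxS
    constructor
    · intro hmin v hv
      set c : EuclideanSpace ℝ (Fin 3) := rbF G δ x v with hc
      set d : V → EuclideanSpace ℝ (Fin 3) := Pi.single v c with hdd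
      set a : ℝ := rubberEnergy G δ d with haa
      have ha : 0 ≤ a := rubberEnergy_nonneg G δ hδnn d
      have key : ∀ t : ℝ, 0 ≤ 2 * (t * ‖c‖ ^ 2) + t ^ 2 * a := by
        intro t
        have hcon : ∀ u ∈ Φ, (x + t • d) u = x₀ u := by
          intro u hu
          have hne : u ≠ v := fun e => hv (e ▸ hu)
          simp only [Pi.add_apply, Pi.smul_apply, hdd, Pi.single_eq_of_ne hne, smul_zero,
            add_zero]
          exact hxS u hu
        have hle := hmin (x + t • d) hcon
        rw [rubberEnergy_expand G δ hδsymm x (t • d), smul_energy G δ d t] at hle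
        have hsum : ∑ u, (inner ℝ (rbF G δ x u) ((t • d) u) : ℝ) = t * ‖c‖ ^ 2 := by
          rw [Finset.sum_eq_single v]
          · simp only [Pi.smul_apply, hdd, Pi.single_eq_same, ← hc]
            rw [real_inner_smul_right, real_inner_self_eq_norm_sq]
          · intro u _ hu
            simp only [Pi.smul_apply, hdd, Pi.single_eq_of_ne hu, smul_zero, inner_zero_right]
          · intro h; exact absurd (Finset.mem_univ v) h
        rw [hsum] at hle
        linarith
      set s : ℝ := ‖c‖ ^ 2 with hss
      have hs : 0 ≤ s := sq_nonneg _
      have ha1 : (0:ℝ) < a + 1 := by linarith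
      have h := key (-(s / (a + 1)))
      have hdiv : s / (a + 1) * (a + 1) = s := div_mul_cancel₀ _ (ne_of_gt ha1)
      have hunn : 0 ≤ s / (a + 1) := div_nonneg hs ha1.le
      have hsle : s ≤ 0 := by nlinarith [h, hdiv, hunn, ha, sq_nonneg (s / (a + 1))]
      have hs0 : ‖c‖ = 0 := by
        have : s = 0 := le_antisymm hsle hs
        rw [hss] at this
        exact pow_eq_zero_iff (n := 2) (by norm_num) |>.mp this
      exact norm_eq_zero.mp hs0
    · intro heq y hyS
      have hyd : y = x + (y - x) := by abel
      rw [hyd, rubberEnergy_expand G δ hδsymm x (y - x)]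
      have hz : ∑ u, (inner ℝ (rbF G δ x u) ((y - x) u) : ℝ) = 0 := by
        refine cross_zero x (y - x) heq fun v hvΦ => ?_
        simp [hyS v hvΦ, hxS v hvΦ]
      rw [hz]
      have := rubberEnergy_nonneg G δ hδnn (y - x)
      linarith
  -- uniqueness among minimizers
  have uniq : ∀ x y : V → EuclideanSpace ℝ (Fin 3),
      (∀ v ∈ Φ, x v = x₀ v) →
      (∀ z : V → EuclideanSpace ℝ (Fin 3), (∀ v ∈ Φ, z v = x₀ v) →
          rubberEnergy G δ x ≤ rubberEnergy G δ z) →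
      (∀ v ∈ Φ, y v = x₀ v) →
      (∀ z : V → EuclideanSpace ℝ (Fin 3), (∀ v ∈ Φ, z v = x₀ v) →
          rubberEnergy G δ y ≤ rubberEnergy G δ z) →
      x = y := by
    intro x y hxS hxm hyS hym
    have hEeq : rubberEnergy G δ x = rubberEnergy G δ y :=
      le_antisymm (hxm y hyS) (hym x hxS)
    have hxe := (char x hxS).mp hxm
    have hyd : y = x + (y - x) := by abel
    have hz : ∑ u, (inner ℝ (rbF G δ x u) ((y - x) u) : ℝ) = 0 := by
      refine cross_zero x (y - x) hxe fun v hvΦ => ?_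
      simp [hyS v hvΦ, hxS v hvΦ]
    have hexp := rubberEnergy_expand G δ hδsymm x (y - x)
    rw [hz, ← hyd] at hexp
    have hEd : rubberEnergy G δ (y - x) = 0 := by linarith
    have hadj : ∀ a b, G.Adj a b → (y - x) a = (y - x) b :=
      fun a b hab => energy_zero_adj_eq G δ hδpos (y - x) hEd hab
    obtain ⟨φ, hφ⟩ := hΦ
    have hd0 : ∀ v, (y - x) v = 0 := by
      intro v
      obtain ⟨p⟩ := hGconn.preconnected φ v
      have := walk_eq G (y - x) hadj p
      rw [← this]
      simp [hyS φ hφ, hxS φ hφ]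
    funext v
    have := hd0 v
    simp only [Pi.sub_apply] at this
    exact (sub_eq_zero.mp this).symm
  -- existence
  obtain ⟨φ, hφ⟩ := hΦ
  set M : ℝ := rubberEnergy G δ x₀ with hM
  have hM0 : 0 ≤ M := rubberEnergy_nonneg G δ hδnn x₀
  set C : ℝ := ((Finset.univ : Finset (V × V)).sup' ⟨(φ, φ), Finset.mem_univ _⟩
      fun p => if G.Adj p.1 p.2 then Real.sqrt (2 * M / δ p.1 p.2) else 0) with hCdef
  have hC0 : 0 ≤ C := by
    have h := Finset.le_sup' (f := fun p : V × V =>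
        if G.Adj p.1 p.2 then Real.sqrt (2 * M / δ p.1 p.2) else 0)
      (Finset.mem_univ (φ, φ))
    rw [← hCdef] at h
    simpa using h
  have hC : ∀ x : V → EuclideanSpace ℝ (Fin 3), rubberEnergy G δ x ≤ M →
      ∀ a b, G.Adj a b → ‖x a - x b‖ ≤ C := by
    intro x hxM a b hab
    have h1 : δ a b * ‖x a - x b‖ ^ 2 ≤ 2 * M := by
      have := edge_le G δ hδnn x hab
      linarith
    have hp := hδpos a b hab
    have h2 : ‖x a - x b‖ ^ 2 ≤ 2 * M / δ a b := by
      rw [le_div_iff₀ hp]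
      linarith [mul_comm (δ a b) (‖x a - x b‖ ^ 2)]
    have h3 : ‖x a - x b‖ ≤ Real.sqrt (2 * M / δ a b) := by
      rw [← Real.sqrt_sq (norm_nonneg (x a - x b))]
      exact Real.sqrt_le_sqrt h2
    refine h3.trans ?_
    have h := Finset.le_sup' (f := fun p : V × V =>
        if G.Adj p.1 p.2 then Real.sqrt (2 * M / δ p.1 p.2) else 0)
      (Finset.mem_univ (a, b))
    rw [← hCdef] at h
    simpa [hab] using h
  set L : ℝ := (Finset.univ : Finset V).sup' ⟨φ, Finset.mem_univ _⟩
      (fun v => ((Classical.choice (hGconn.preconnected φ v) : G.Walk φ v).length : ℝ)) with hLdef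
  have hL0 : 0 ≤ L := by
    have := Finset.le_sup' (f := fun v =>
        ((Classical.choice (hGconn.preconnected φ v) : G.Walk φ v).length : ℝ))
      (Finset.mem_univ φ)
    have h0 : (0:ℝ) ≤ ((Classical.choice (hGconn.preconnected φ φ) : G.Walk φ φ).length : ℝ) := by
      positivity
    linarith
  set R : ℝ := ‖x₀ φ‖ + L * C with hRdef
  have hR0 : 0 ≤ R := by positivity
  have hball : ∀ x : V → EuclideanSpace ℝ (Fin 3), (∀ v ∈ Φ, x v = x₀ v) →
      rubberEnergy G δ x ≤ M → ∀ v, ‖x v‖ ≤ R := by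
    intro x hxS hxM v
    have hwalk := walk_norm_le G x C (hC x hxM)
      (Classical.choice (hGconn.preconnected φ v) : G.Walk φ v)
    have hlen : ((Classical.choice (hGconn.preconnected φ v) : G.Walk φ v).length : ℝ) ≤ L := by
      have h := Finset.le_sup' (f := fun v =>
          ((Classical.choice (hGconn.preconnected φ v) : G.Walk φ v).length : ℝ))
        (Finset.mem_univ v)
      rw [← hLdef] at h
      exact h
    have h1 : ‖x φ - x v‖ ≤ L * C := hwalk.trans (mul_le_mul_of_nonneg_right hlen hC0)
    have h2 : ‖x v‖ ≤ ‖x φ‖ + ‖x φ - x v‖ := by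
      have h3 := norm_add_le (x φ) (x v - x φ)
      have h4 : x φ + (x v - x φ) = x v := by abel
      rw [h4, norm_sub_rev (x v) (x φ)] at h3
      exact h3
    rw [hxS φ hφ] at h1 h2
    rw [hRdef]
    linarith
  set K : Set (V → EuclideanSpace ℝ (Fin 3)) :=
    {x | (∀ v ∈ Φ, x v = x₀ v) ∧ rubberEnergy G δ x ≤ M} with hKdef
  have hx₀K : x₀ ∈ K := ⟨fun v _ => rfl, le_refl M⟩
  have hKclosed : IsClosed K := by
    have hc1 : IsClosed {x : V → EuclideanSpace ℝ (Fin 3) | ∀ v ∈ Φ, x v = x₀ v} := by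
      have : {x : V → EuclideanSpace ℝ (Fin 3) | ∀ v ∈ Φ, x v = x₀ v}
          = ⋂ v ∈ Φ, {x | x v = x₀ v} := by ext x; simp
      rw [this]
      exact isClosed_biInter fun v _ => isClosed_eq (continuous_apply v) continuous_const
    have hc2 : IsClosed {x : V → EuclideanSpace ℝ (Fin 3) | rubberEnergy G δ x ≤ M} :=
      isClosed_le (rubberEnergy_continuous G δ) continuous_const
    exact hc1.inter hc2
  have hKsub : K ⊆ Metric.closedBall 0 R := by
    intro x ⟨hxS, hxM⟩
    rw [Metric.mem_closedBall, dist_zero_right]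
    exact (pi_norm_le_iff_of_nonneg hR0).mpr (hball x hxS hxM)
  have hKcompact : IsCompact K :=
    Metric.isCompact_of_isClosed_isBounded hKclosed
      ((Metric.isBounded_closedBall).subset hKsub)
  obtain ⟨xm, hxmK, hxmmin⟩ := hKcompact.exists_isMinOn ⟨x₀, hx₀K⟩
    ((rubberEnergy_continuous G δ).continuousOn)
  have hxmS : ∀ v ∈ Φ, xm v = x₀ v := hxmK.1
  have hmin : ∀ y : V → EuclideanSpace ℝ (Fin 3), (∀ v ∈ Φ, y v = x₀ v) →
      rubberEnergy G δ xm ≤ rubberEnergy G δ y := by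
    intro y hyS
    by_cases hy : rubberEnergy G δ y ≤ M
    · exact hxmmin (⟨hyS, hy⟩ : y ∈ K)
    · have h1 : rubberEnergy G δ xm ≤ M := hxmmin hx₀K
      push_neg at hy
      linarith
  refine ⟨⟨xm, ⟨hxmS, hmin⟩, ?_⟩, ?_⟩
  · rintro y ⟨hyS, hym⟩
    exact uniq y xm hyS hym hxmS hmin
  · intro x hxS
    have := char x hxS
    simpa only [rbF] using this
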